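/- Fix a real number λ and a nonnegative integer r. In the ring ℝ[[t]] of formal power series, the power series e_λ(t) + 1 has constant term 2, hence is invertible, and the degenerate Euler numbers at r, defined by 2·(e_λ(t) + 1)⁻¹ · e_λ^r(t) = Σ_{n≥0} 𝓔_{n,λ}(r) t^n/n!, satisfy 𝓔_{n,λ}(r) = Σ_{k=0}^{n} (−1/2)^k · k! · {n+r, k+r}_{r,λ} for every n ≥ 0. -/

import Mathlib

open Finset PowerSeries

/-- The degenerate falling factorial `(y)_{n,λ} = y(y-λ)(y-2λ)⋯(y-(n-1)λ)`. -/
noncomputable def degFall (lam y : ℝ) (n : ℕ) : ℝ := ∏ i ∈ Finset.range n, (y - i * lam)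

lemma degFall_zero (lam y : ℝ) : degFall lam y 0 = 1 := by simp [degFall]

lemma degFall_succ (lam y : ℝ) (n : ℕ) :
    degFall lam y (n+1) = degFall lam y n * (y - n*lam) := by
  simp [degFall, Finset.prod_range_succ]

lemma degFall_add (lam : ℝ) (n : ℕ) (a b : ℝ) :
    degFall lam (a+b) n
      = ∑ j ∈ range (n+1), (n.choose j : ℝ) * degFall lam a j * degFall lam b (n-j) := by
  induction n with
  | zero => simp [degFall]
  | succ n ih =>
    rw [degFall_succ, ih, Finset.sum_mul]
    have key : ∀ j ∈ range (n+1),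
        (n.choose j : ℝ) * degFall lam a j * degFall lam b (n-j) * (a + b - n*lam)
          = (n.choose j : ℝ) * degFall lam a (j+1) * degFall lam b ((n+1)-(j+1))
            + (n.choose j : ℝ) * degFall lam a j * degFall lam b ((n+1)-j) := by
      intro j hj
      rw [mem_range, Nat.lt_succ_iff] at hj
      have h1 : (n+1) - (j+1) = n - j := by omega
      have h2 : (n+1) - j = (n-j) + 1 := by omega
      have hcast : ((n - j : ℕ) : ℝ) = (n : ℝ) - j := by
        rw [Nat.cast_sub hj]
      rw [h1, h2, degFall_succ, degFall_succ]
      have h3 : a + b - n*lam = (a - j*lam) + (b - ((n-j:ℕ):ℝ)*lam) := by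
        rw [hcast]; ring
      rw [h3]; ring
    rw [Finset.sum_congr rfl key, Finset.sum_add_distrib]
    have e1 : ∑ j ∈ range (n+2), ((n+1).choose j : ℝ) * degFall lam a j * degFall lam b ((n+1)-j)
        = (∑ j ∈ range (n+1), ((n+1).choose (j+1) : ℝ) * degFall lam a (j+1) * degFall lam b ((n+1)-(j+1)))
          + ((n+1).choose 0 : ℝ) * degFall lam a 0 * degFall lam b (n+1) :=
      Finset.sum_range_succ' _ (n+1)
    rw [e1]
    have e2 : ∀ j ∈ range (n+1),
        ((n+1).choose (j+1) : ℝ) * degFall lam a (j+1) * degFall lam b ((n+1)-(j+1))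
          = (n.choose j : ℝ) * degFall lam a (j+1) * degFall lam b ((n+1)-(j+1))
            + (n.choose (j+1) : ℝ) * degFall lam a (j+1) * degFall lam b ((n+1)-(j+1)) := by
      intro j hj
      rw [Nat.choose_succ_succ]
      push_cast
      ring
    rw [Finset.sum_congr rfl e2, Finset.sum_add_distrib]
    have e3 : (∑ j ∈ range (n+1), (n.choose (j+1) : ℝ) * degFall lam a (j+1) * degFall lam b ((n+1)-(j+1)))
          + ((n+1).choose 0 : ℝ) * degFall lam a 0 * degFall lam b (n+1)
        = ∑ j ∈ range (n+1), (n.choose j : ℝ) * degFall lam a j * degFall lam b ((n+1)-j) := by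
      have := Finset.sum_range_succ' (fun j => (n.choose j : ℝ) * degFall lam a j * degFall lam b ((n+1)-j)) (n+1)
      simp only [Nat.choose_zero_right, Nat.cast_one, Nat.sub_zero] at this ⊢
      rw [← this]
      rw [Finset.sum_range_succ]
      simp [Nat.choose_succ_self]
    rw [add_assoc, e3]

/-- The degenerate exponential `e_λ^y(t) = ∑_{n≥0} (y)_{n,λ} tⁿ/n!` as a formal power series. -/
noncomputable def degExp (lam y : ℝ) : PowerSeries ℝ :=
  PowerSeries.mk fun n => degFall lam y n / (Nat.factorial n : ℝ)

lemma degExp_coeff (lam y : ℝ) (n : ℕ) :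
    coeff n (degExp lam y) = degFall lam y n / (Nat.factorial n : ℝ) := by
  simp [degExp]

lemma degExp_mul (lam a b : ℝ) : degExp lam (a+b) = degExp lam a * degExp lam b := by
  ext n
  rw [coeff_mul, Finset.Nat.sum_antidiagonal_eq_sum_range_succ_mk, degExp_coeff,
    degFall_add, Finset.sum_div]
  refine Finset.sum_congr rfl fun j hj => ?_
  rw [mem_range, Nat.lt_succ_iff] at hj
  rw [degExp_coeff, degExp_coeff]
  have h := Nat.choose_mul_factorial_mul_factorial hj
  have h1 : (Nat.factorial n : ℝ) ≠ 0 := Nat.cast_ne_zero.mpr (Nat.factorial_ne_zero n)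
  have h2 : (Nat.factorial j : ℝ) ≠ 0 := Nat.cast_ne_zero.mpr (Nat.factorial_ne_zero j)
  have h3 : (Nat.factorial (n-j) : ℝ) ≠ 0 := Nat.cast_ne_zero.mpr (Nat.factorial_ne_zero (n-j))
  have h' : (n.choose j : ℝ) * (Nat.factorial j : ℝ) * (Nat.factorial (n-j) : ℝ)
      = (Nat.factorial n : ℝ) := by exact_mod_cast congrArg Nat.cast h
  field_simp
  rw [← h']
  ring

lemma degExp_zero (lam : ℝ) : degExp lam 0 = 1 := by
  ext n
  rw [degExp_coeff]
  cases n with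
  | zero => simp [degFall]
  | succ n =>
    have : degFall lam 0 (n+1) = 0 := by
      apply Finset.prod_eq_zero (Finset.mem_range.mpr (Nat.succ_pos n))
      simp
    rw [this]
    simp [PowerSeries.coeff_one]

lemma degExp_nat (lam : ℝ) (m : ℕ) : degExp lam m = (degExp lam 1) ^ m := by
  induction m with
  | zero => simpa using degExp_zero lam
  | succ m ih =>
    have : ((m+1 : ℕ) : ℝ) = (m : ℝ) + 1 := by push_cast; ring
    rw [this, degExp_mul, ih, pow_succ]

lemma degFall_one_nat (m k : ℕ) : degFall 1 (m:ℝ) k = (m.descFactorial k : ℝ) := by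
  by_cases h : k ≤ m
  · rw [Nat.descFactorial_eq_prod_range]
    rw [degFall, Nat.cast_prod]
    refine Finset.prod_congr rfl fun i hi => ?_
    rw [mem_range] at hi
    have : i ≤ m := le_trans (Nat.le_of_lt hi) h
    push_cast [Nat.cast_sub this]
    ring
  · push_neg at h
    rw [Nat.descFactorial_eq_zero_iff_lt.mpr h, Nat.cast_zero, degFall]
    apply Finset.prod_eq_zero (Finset.mem_range.mpr h)
    simp

lemma tri_inv (n : ℕ) (A B : ℕ → ℝ)
    (h : ∀ m : ℕ, m ≤ n → ∑ k ∈ range (n+1), A k * degFall 1 (m:ℝ) k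
                     = ∑ k ∈ range (n+1), B k * degFall 1 (m:ℝ) k) :
    ∀ k, k ≤ n → A k = B k := by
  intro k
  induction k using Nat.strong_induction_on with
  | _ k ih =>
    intro hk
    have h0 := h k hk
    have hred : ∀ (C : ℕ → ℝ), ∑ j ∈ range (n+1), C j * degFall 1 (k:ℝ) j
        = (∑ j ∈ range k, C j * degFall 1 (k:ℝ) j) + C k * degFall 1 (k:ℝ) k := by
      intro C
      rw [← Finset.sum_range_succ]
      symm
      apply Finset.sum_subset
      · intro x hx; rw [mem_range] at *; omega
      · intro x _ hx
        rw [mem_range, Nat.lt_succ_iff, not_le] at hx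
        rw [degFall_one_nat, Nat.descFactorial_eq_zero_iff_lt.mpr hx]
        simp
    rw [hred, hred] at h0
    have hsame : ∑ j ∈ range k, A j * degFall 1 (k:ℝ) j
        = ∑ j ∈ range k, B j * degFall 1 (k:ℝ) j := by
      refine Finset.sum_congr rfl fun j hj => ?_
      rw [mem_range] at hj
      rw [ih j hj (by omega)]
    rw [hsame] at h0
    have hne : degFall 1 (k:ℝ) k ≠ 0 := by
      rw [degFall_one_nat, Nat.descFactorial_self]
      exact_mod_cast Nat.factorial_ne_zero k
    have := add_left_cancel h0
    exact mul_right_cancel₀ hne this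

/-- In `ℝ⟦t⟧`, the series `e_λ(t) + 1` has constant term `2` (hence is a unit), and the
degenerate Euler numbers at `r`, defined by
`2(e_λ(t)+1)⁻¹ e_λ^r(t) = ∑_{n≥0} 𝓔_{n,λ}(r) tⁿ/n!`, satisfy
`𝓔_{n,λ}(r) = ∑_{k=0}^{n} (−1/2)^k k! {n+r,k+r}_{r,λ}`. -/
theorem degenerate_euler_generating (lam : ℝ) (r : ℕ) (S2 : ℕ → ℕ → ℝ)
    (hS2 : ∀ (n : ℕ) (y : ℝ),
      degFall lam (y + r) n = ∑ k ∈ range (n + 1), S2 n k * degFall 1 y k)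
    (E : ℕ → ℝ)
    (hE : 2 * (degExp lam 1 + 1)⁻¹ * degExp lam r
      = PowerSeries.mk fun n => E n / (Nat.factorial n : ℝ)) :
    constantCoeff (degExp lam 1 + 1) = 2 ∧
    ∀ n : ℕ, E n = ∑ k ∈ range (n + 1),
      (-1 / 2 : ℝ) ^ k * (Nat.factorial k : ℝ) * S2 n k := by
  -- constant coefficient
  have h2 : constantCoeff (degExp lam 1 + 1) = 2 := by
    rw [map_add, ← coeff_zero_eq_constantCoeff_apply, degExp_coeff, degFall_zero]
    norm_num
  refine ⟨h2, ?_⟩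
  set u : PowerSeries ℝ := degExp lam 1 - 1 with hu
  set Er : PowerSeries ℝ := degExp lam r with hEr
  have hu0 : constantCoeff u = 0 := by
    have : constantCoeff (degExp lam 1) = 1 := by
      rw [← coeff_zero_eq_constantCoeff_apply, degExp_coeff, degFall_zero]; norm_num
    simp [hu, this]
  -- vanishing of low coefficients of u^k * Er
  have hD0 : ∀ (n k : ℕ), n < k → coeff n (u^k * Er) = 0 := by
    intro n k hnk
    have hdvd : (X : ℝ⟦X⟧)^k ∣ u^k * Er :=
      Dvd.dvd.mul_right (pow_dvd_pow_of_dvd (X_dvd_iff.mpr hu0) k) Er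
    exact X_pow_dvd_iff.mp hdvd n hnk
  have hfac : ∀ k : ℕ, (Nat.factorial k : ℝ) ≠ 0 :=
    fun k => Nat.cast_ne_zero.mpr (Nat.factorial_ne_zero k)
  -- coefficient of e^m * Er two ways
  have hway1 : ∀ (m n : ℕ), coeff n ((degExp lam 1)^m * Er)
      = ∑ k ∈ range (n+1), (coeff n (u^k * Er) / (Nat.factorial k : ℝ)) * degFall 1 (m:ℝ) k := by
    intro m n
    have hexp : (degExp lam 1)^m = ∑ k ∈ range (m+1), u^k * ((m.choose k : ℕ) : ℝ⟦X⟧) := by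
      have : degExp lam 1 = u + 1 := by rw [hu]; ring
      rw [this, add_pow]
      refine Finset.sum_congr rfl fun k _ => by rw [one_pow, mul_one]
    rw [hexp, Finset.sum_mul, map_sum]
    have hterm : ∀ k, coeff n (u^k * ((m.choose k : ℕ) : ℝ⟦X⟧) * Er)
        = (m.choose k : ℝ) * coeff n (u^k * Er) := by
      intro k
      have hc : ((m.choose k : ℕ) : ℝ⟦X⟧) = C ((m.choose k : ℕ) : ℝ) :=
        (map_natCast C (m.choose k)).symm
      rw [show u^k * ((m.choose k : ℕ) : ℝ⟦X⟧) * Er = ((m.choose k : ℕ) : ℝ⟦X⟧) * (u^k * Er) by ring,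
        hc, coeff_C_mul]
    simp only [hterm]
    -- both sides equal a sum over range (m+n+2)
    have hg : ∀ k, (m.choose k : ℝ) * coeff n (u^k * Er)
        = (coeff n (u^k * Er) / (Nat.factorial k : ℝ)) * (m.descFactorial k : ℝ) := by
      intro k
      have h := Nat.descFactorial_eq_factorial_mul_choose m k
      have h' : (m.descFactorial k : ℝ) = (Nat.factorial k : ℝ) * (m.choose k : ℝ) := by
        exact_mod_cast congrArg Nat.cast h
      rw [h']
      field_simp
    have e1 : ∑ k ∈ range (m+1), (m.choose k : ℝ) * coeff n (u^k * Er)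
        = ∑ k ∈ range (m+n+2), (coeff n (u^k * Er) / (Nat.factorial k : ℝ)) * (m.descFactorial k : ℝ) := by
      rw [← Finset.sum_subset (Finset.range_subset_range.mpr (by omega : m+1 ≤ m+n+2))
        (fun x _ hx => ?_)]
      · exact Finset.sum_congr rfl fun k _ => hg k
      · rw [mem_range, not_lt] at hx
        have : m < x := by omega
        rw [Nat.descFactorial_eq_zero_iff_lt.mpr this]
        simp
    have e2 : ∑ k ∈ range (n+1), (coeff n (u^k * Er) / (Nat.factorial k : ℝ)) * degFall 1 (m:ℝ) k
        = ∑ k ∈ range (m+n+2), (coeff n (u^k * Er) / (Nat.factorial k : ℝ)) * (m.descFactorial k : ℝ) := by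
      rw [← Finset.sum_subset (Finset.range_subset_range.mpr (by omega : n+1 ≤ m+n+2))
        (fun x _ hx => ?_)]
      · exact Finset.sum_congr rfl fun k _ => by rw [degFall_one_nat]
      · rw [mem_range, not_lt] at hx
        have : n < x := by omega
        rw [hD0 n x this]
        simp
    rw [e1, e2]
  -- second way, via hS2
  have hway2 : ∀ (m n : ℕ), coeff n ((degExp lam 1)^m * Er)
      = ∑ k ∈ range (n+1), (S2 n k / (Nat.factorial n : ℝ)) * degFall 1 (m:ℝ) k := by
    intro m n
    have hmr : degExp lam ((m : ℝ) + (r : ℝ)) = (degExp lam 1)^m * Er := by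
      rw [degExp_mul, degExp_nat]
    rw [← hmr, degExp_coeff, hS2 n (m : ℝ), Finset.sum_div]
    exact Finset.sum_congr rfl fun k _ => by ring
  -- identify coefficients
  have hkey : ∀ (n k : ℕ), k ≤ n →
      coeff n (u^k * Er) = (Nat.factorial k : ℝ) * S2 n k / (Nat.factorial n : ℝ) := by
    intro n k hk
    have := tri_inv n (fun k => coeff n (u^k * Er) / (Nat.factorial k : ℝ))
      (fun k => S2 n k / (Nat.factorial n : ℝ))
      (fun m _ => by rw [← hway1 m n, ← hway2 m n]) k hk
    field_simp at this
    field_simp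
    rw [this]
  -- the candidate series
  set F : ℝ⟦X⟧ := PowerSeries.mk (fun n =>
    (∑ k ∈ range (n+1), (-1/2 : ℝ)^k * (Nat.factorial k : ℝ) * S2 n k) / (Nat.factorial n : ℝ))
    with hF
  have hcoeffF : ∀ n : ℕ, coeff n F = ∑ k ∈ range (n+1), (-1/2 : ℝ)^k * coeff n (u^k * Er) := by
    intro n
    rw [hF, coeff_mk, Finset.sum_div]
    refine Finset.sum_congr rfl fun k hk => ?_
    rw [mem_range, Nat.lt_succ_iff] at hk
    rw [hkey n k hk]
    ring
  -- partial sums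
  set P : ℕ → ℝ⟦X⟧ := fun N => ∑ k ∈ range (N+1), C ((-1/2 : ℝ)^k) * (u^k * Er) with hP
  have hcoeffP : ∀ (j N : ℕ), coeff j (P N)
      = ∑ k ∈ range (N+1), (-1/2 : ℝ)^k * coeff j (u^k * Er) := by
    intro j N
    rw [hP]
    simp only [map_sum, coeff_C_mul]
  have hFP : ∀ (n j : ℕ), j ≤ n → coeff j F = coeff j (P n) := by
    intro n j hj
    rw [hcoeffF j, hcoeffP j n]
    apply Finset.sum_subset (Finset.range_subset_range.mpr (by omega : j+1 ≤ n+1))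
    intro x _ hx
    rw [mem_range, not_lt] at hx
    rw [hD0 j x (by omega)]
    ring
  -- telescoping
  have tele : ∀ N : ℕ, (u + 2) * P N = 2 * Er + C ((-1/2 : ℝ)^N) * (u^(N+1) * Er) := by
    intro N
    induction N with
    | zero =>
      rw [hP]
      simp only [zero_add, Finset.sum_range_one, pow_zero, pow_one, map_one, one_mul]
      ring
    | succ N ih =>
      have hPs : P (N+1) = P N + C ((-1/2 : ℝ)^(N+1)) * (u^(N+1) * Er) := by
        rw [hP]
        exact Finset.sum_range_succ _ (N+1)
      have hc : (2 : ℝ⟦X⟧) * C ((-1/2 : ℝ)^(N+1)) = - C ((-1/2 : ℝ)^N) := by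
        have h2' : (2 : ℝ⟦X⟧) = C 2 := by
          simp [map_ofNat]
        rw [h2', ← map_mul, ← map_neg]
        congr 1
        ring
      rw [hPs]
      have hup : u^(N+1) * u = u^(N+2) := by ring
      linear_combination ih + (u^(N+1) * Er) * hc
  -- main identity
  have hmain : (degExp lam 1 + 1) * F = 2 * Er := by
    have he1 : degExp lam 1 + 1 = u + 2 := by rw [hu]; ring
    rw [he1]
    ext n
    have step1 : coeff n ((u + 2) * F) = coeff n ((u + 2) * P n) := by
      rw [coeff_mul, coeff_mul]
      refine Finset.sum_congr rfl fun p hp => ?_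
      rw [hFP n p.2 (Finset.HasAntidiagonal.antidiagonal.snd_le hp)]
    rw [step1, tele n, map_add, coeff_C_mul, hD0 n (n+1) (by omega)]
    ring
  -- conclude
  have hne : constantCoeff (degExp lam 1 + 1) ≠ 0 := by rw [h2]; norm_num
  have hinv : (degExp lam 1 + 1) * (2 * (degExp lam 1 + 1)⁻¹ * Er) = 2 * Er := by
    have := PowerSeries.mul_inv_cancel _ hne
    calc (degExp lam 1 + 1) * (2 * (degExp lam 1 + 1)⁻¹ * Er)
        = ((degExp lam 1 + 1) * (degExp lam 1 + 1)⁻¹) * (2 * Er) := by ring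
      _ = 2 * Er := by rw [this, one_mul]
  have hzero : (degExp lam 1 + 1) ≠ 0 := by
    intro h
    rw [h] at h2
    simp at h2
  have hFE : F = PowerSeries.mk (fun n => E n / (Nat.factorial n : ℝ)) := by
    apply mul_left_cancel₀ hzero
    rw [hmain, ← hE, hinv]
  intro n
  have := congrArg (coeff n) hFE
  rw [hF, coeff_mk, coeff_mk] at this
  have h3 := (div_eq_div_iff (hfac n) (hfac n)).mp this
  exact (mul_right_cancel₀ (hfac n) h3).symm
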